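/- For the powerset functor P on the category of types (P X = Set X, with P acting on functions by taking images), if f : X → Set Y is P-precise, then f x = ∅ for every x : X. -/
import Mathlib


universe u

/-- A function `s : S → Set R` is precise for the powerset functor
(`P X = Set X`, acting on functions by taking images) if whenever
`Set.image h ∘ f = Set.image g ∘ s` there is `d : R → C` with
`Set.image d ∘ s = f` and `h ∘ d = g`. -/
def PowersetPrecise {S R : Type u} (s : S → Set R) : Prop :=
  ∀ {C D : Type u} (f : S → Set C) (g : R → D) (h : C → D),
    Set.image h ∘ f = Set.image g ∘ s →
    ∃ d : R → C, Set.image d ∘ s = f ∧ h ∘ d = g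

/-- If `f : X → Set Y` is precise for the powerset functor, then `f x = ∅` for
every `x`. -/
theorem powersetPrecise_empty {X Y : Type u} (f : X → Set Y)
    (hf : PowersetPrecise f) : ∀ x : X, f x = ∅ := by
  intro x₀
  by_contra hne
  have hnon : (f x₀).Nonempty := Set.nonempty_iff_ne_empty.mpr hne
  classical
  set f' : X → Set (Set Y) := fun x => if (f x).Nonempty then Set.univ else ∅ with hf'
  have hcomm : Set.image (fun _ : Set Y => PUnit.unit.{u+1}) ∘ f'
      = Set.image (fun _ : Y => PUnit.unit.{u+1}) ∘ f := by
    funext x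
    by_cases h : (f x).Nonempty
    · simp only [Function.comp_apply, hf', h, if_pos]
      rw [Set.Nonempty.image_const h, Set.Nonempty.image_const (Set.univ_nonempty)]
    · have : f x = ∅ := Set.not_nonempty_iff_eq_empty.mp h
      simp [hf', h, this]
  obtain ⟨d, hd1, _⟩ := hf f' (fun _ => PUnit.unit) (fun _ => PUnit.unit) hcomm
  have himg : Set.image d (f x₀) = Set.univ := by
    have := congrFun hd1 x₀
    simpa [hf', hnon] using this
  have hsurj : Function.Surjective d := fun t => by
    have ht : t ∈ Set.image d (f x₀) := himg ▸ Set.mem_univ t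
    obtain ⟨y, _, hy⟩ := ht
    exact ⟨y, hy⟩
  exact Function.cantor_surjective d hsurj
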